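/- Let a = (α⁰,α¹,α²,α³) and b = (β⁰,β¹,β²,β³) be vectors in ℂ⁴ with all components nonzero and γ⁰² = α⁰β² − α²β⁰ ≠ 0, and let x¹ = (0,0,1,0), x² = (1,0,0,0), x³ = a, x⁴ = (0,0,0,1), x⁵ = (0,1,0,0), x⁶ = b. Let B be the symmetric matrix with B₀₂ = B₂₀ = γ¹³ = α¹β³ − α³β¹, B₁₃ = B₃₁ = γ⁰², B₀₀ = −(β²/β⁰)γ¹³, B₁₁ = −(α³/α¹)γ⁰², B₂₂ = −(α⁰/α²)γ¹³, B₃₃ = −(β¹/β³)γ⁰², other entries zero. For μ¹, μ² ∈ ℂ set μ³ = (β⁰μ¹ − β²μ²)/γ⁰², μ⁴ = (γ⁰³μ¹ − γ²³μ²)/γ⁰², μ⁵ = (γ⁰¹μ¹ + γ¹²μ²)/γ⁰², μ⁶ = −(α⁰μ¹ − α²μ²)/γ⁰², where γ^{μν} = α^μβ^ν − α^νβ^μ, and define x¹² = μ¹x¹ + μ²x², x³⁴ = μ³x³ + μ⁴x⁴, x⁵⁶ = μ⁵x⁵ + μ⁶x⁶, x²³ = μ²x² + μ³x³, x⁴⁵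 = μ⁴x⁴ + μ⁵x⁵, x⁶¹ = μ⁶x⁶ + μ¹x¹. Then: (i) x¹² + x³⁴ + x⁵⁶ = 0 (so x¹², x³⁴, x⁵⁶ are collinear points of a line l, and likewise x²³, x⁴⁵, x⁶¹ lie on a line l′); (ii) (x¹²)ᵀ B x²³ = 0 (so l′ is the image of l under the polarity B); and (iii) det[x², x³⁴, x⁵, x⁶¹] = 0 (the coplanarity property holds), so the eight lines form an elementary cube of a fundamental line complex in ℂP³. -/

import Mathlib

open Matrix

set_option maxHeartbeats 1000000

/-- The symmetric matrix `B` of the polarity associated with the hexagon with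
vertices `x¹ = (0,0,1,0)`, `x² = (1,0,0,0)`, `x³ = a`, `x⁴ = (0,0,0,1)`,
`x⁵ = (0,1,0,0)`, `x⁶ = b`, where `γ⁰² = α⁰β² − α²β⁰` and `γ¹³ = α¹β³ − α³β¹`. -/
noncomputable def hexB (α0 α1 α2 α3 β0 β1 β2 β3 : ℂ) : Matrix (Fin 4) (Fin 4) ℂ :=
  !![-(β2 / β0) * (α1 * β3 - α3 * β1), 0, α1 * β3 - α3 * β1, 0;
     0, -(α3 / α1) * (α0 * β2 - α2 * β0), 0, α0 * β2 - α2 * β0;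
     α1 * β3 - α3 * β1, 0, -(α0 / α2) * (α1 * β3 - α3 * β1), 0;
     0, α0 * β2 - α2 * β0, 0, -(β1 / β3) * (α0 * β2 - α2 * β0)]

/-- The coefficients `μ³, μ⁴, μ⁵, μ⁶` determined by `μ¹, μ²`,
with `γ^{μν} = α^μβ^ν − α^νβ^μ`. -/
noncomputable def μ3 (α0 α1 α2 α3 β0 β1 β2 β3 μ1 μ2 : ℂ) : ℂ :=
  (β0 * μ1 - β2 * μ2) / (α0 * β2 - α2 * β0)

noncomputable def μ4 (α0 α1 α2 α3 β0 β1 β2 β3 μ1 μ2 : ℂ) : ℂ :=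
  ((α0 * β3 - α3 * β0) * μ1 - (α2 * β3 - α3 * β2) * μ2) / (α0 * β2 - α2 * β0)

noncomputable def μ5 (α0 α1 α2 α3 β0 β1 β2 β3 μ1 μ2 : ℂ) : ℂ :=
  ((α0 * β1 - α1 * β0) * μ1 + (α1 * β2 - α2 * β1) * μ2) / (α0 * β2 - α2 * β0)

noncomputable def μ6 (α0 α1 α2 α3 β0 β1 β2 β3 μ1 μ2 : ℂ) : ℂ :=
  -(α0 * μ1 - α2 * μ2) / (α0 * β2 - α2 * β0)

/-- An elementary cube of a fundamental line complex from a hexagon and a polarity: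
with `x¹² = μ¹x¹ + μ²x²` etc., (i) `x¹² + x³⁴ + x⁵⁶ = 0` and `x²³ + x⁴⁵ + x⁶¹ = 0`
(the two triples of points are collinear, defining the lines `l` and `l′`);
(ii) `(x¹²)ᵀ B x²³ = 0` (so `l′` is the image of `l` under the polarity `B`); and
(iii) `det[x², x³⁴, x⁵, x⁶¹] = 0` (the coplanarity property),
so the eight lines form an elementary cube of a fundamental line complex in `ℂP³`. -/
theorem hexagon_cube_fundamental (α0 α1 α2 α3 β0 β1 β2 β3 μ1 μ2 : ℂ)
    (hα0 : α0 ≠ 0) (hα1 : α1 ≠ 0) (hα2 : α2 ≠ 0) (hα3 : α3 ≠ 0)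
    (hβ0 : β0 ≠ 0) (hβ1 : β1 ≠ 0) (hβ2 : β2 ≠ 0) (hβ3 : β3 ≠ 0)
    (hγ02 : α0 * β2 - α2 * β0 ≠ 0) :
    let x1 : Fin 4 → ℂ := ![0, 0, 1, 0]
    let x2 : Fin 4 → ℂ := ![1, 0, 0, 0]
    let x3 : Fin 4 → ℂ := ![α0, α1, α2, α3]
    let x4 : Fin 4 → ℂ := ![0, 0, 0, 1]
    let x5 : Fin 4 → ℂ := ![0, 1, 0, 0]
    let x6 : Fin 4 → ℂ := ![β0, β1, β2, β3]
    let m3 := μ3 α0 α1 α2 α3 β0 β1 β2 β3 μ1 μ2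
    let m4 := μ4 α0 α1 α2 α3 β0 β1 β2 β3 μ1 μ2
    let m5 := μ5 α0 α1 α2 α3 β0 β1 β2 β3 μ1 μ2
    let m6 := μ6 α0 α1 α2 α3 β0 β1 β2 β3 μ1 μ2
    let x12 := μ1 • x1 + μ2 • x2
    let x34 := m3 • x3 + m4 • x4
    let x56 := m5 • x5 + m6 • x6
    let x23 := μ2 • x2 + m3 • x3
    let x45 := m4 • x4 + m5 • x5
    let x61 := m6 • x6 + μ1 • x1
    (x12 + x34 + x56 = 0 ∧ x23 + x45 + x61 = 0)
      ∧ x12 ⬝ᵥ (hexB α0 α1 α2 α3 β0 β1 β2 β3).mulVec x23 = 0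
      ∧ Matrix.det (Matrix.of ![x2, x34, x5, x61]) = 0 := by
  intro x1 x2 x3 x4 x5 x6 m3 m4 m5 m6 x12 x34 x56 x23 x45 x61
  have h1 : β2 * α0 - β0 * α2 ≠ 0 := fun h => hγ02 (by linear_combination h)
  have h2 : -(β0 * α2) + β2 * α0 ≠ 0 := fun h => hγ02 (by linear_combination h)
  refine ⟨⟨?_, ?_⟩, ?_, ?_⟩
  · funext i
    fin_cases i <;>
      simp [x12, x34, x56, x1, x2, x3, x4, x5, x6, m3, m4, m5, m6, μ3, μ4, μ5, μ6] <;>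
      field_simp [h1, h2] <;> ring
  · funext i
    fin_cases i <;>
      simp [x23, x45, x61, x1, x2, x3, x4, x5, x6, m3, m4, m5, m6, μ3, μ4, μ5, μ6] <;>
      field_simp [h1, h2] <;> ring
  · simp only [x12, x23, x1, x2, x3, m3, μ3, hexB, dotProduct, mulVec, Fin.sum_univ_four]
    simp [Matrix.cons_val_zero, Matrix.cons_val_one]
    field_simp [h1, h2]
    ring
  · simp only [x34, x61, x2, x3, x4, x5, x6, x1, m3, m4, m6, μ3, μ4, μ6,
      Matrix.det_succ_row_zero, Fin.sum_univ_succ, Matrix.of_apply]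
    simp [Fin.sum_univ_succ, Fin.succAbove, Fin.lt_def]
    field_simp [h1, h2]
    ring
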